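/- Let T be a linear relation from H to K. Then mul(T*T) = mul T*, where T*T = {(f,f') : ∃ h, (f,h) ∈ T and (h,f') ∈ T*}; moreover for every (f,f') in T*T with intermediate element h one has ⟨f', f⟩ = ‖h‖², and consequently the relation T*T is nonnegative: ⟨f', f⟩ ≥ 0 for all (f,f') ∈ T*T. -/

import Mathlib

/-- The adjoint of a linear relation `T ⊆ H × K`, as a set of pairs in `K × H`. -/
def adjRel {H K : Type*} [NormedAddCommGroup H] [InnerProductSpace ℂ H]
    [NormedAddCommGroup K] [InnerProductSpace ℂ K]
    (T : Set (H × K)) : Set (K × H) :=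
  {q | ∀ p ∈ T, (inner ℂ p.2 q.1 : ℂ) = inner ℂ p.1 q.2}

/-- For a linear relation `T`: `mul (T*T) = mul T*`; for `(f, f') ∈ T*T` with
intermediate element `h` one has `⟨f, f'⟩ = ‖h‖²`; consequently `T*T` is a
nonnegative relation. -/
theorem mul_adjoint_comp_and_nonneg
    {H K : Type*} [NormedAddCommGroup H] [InnerProductSpace ℂ H] [CompleteSpace H]
    [NormedAddCommGroup K] [InnerProductSpace ℂ K] [CompleteSpace K]
    (T : Submodule ℂ (H × K)) :
    ({f' : H | ∃ h : K, ((0 : H), h) ∈ T ∧ (h, f') ∈ adjRel (T : Set (H × K))} =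
      {f' : H | ((0 : K), f') ∈ adjRel (T : Set (H × K))}) ∧
    (∀ (f f' : H) (h : K), (f, h) ∈ T → (h, f') ∈ adjRel (T : Set (H × K)) →
      (inner ℂ f f' : ℂ) = (‖h‖ : ℂ) ^ 2) ∧
    (∀ f f' : H, (∃ h : K, (f, h) ∈ T ∧ (h, f') ∈ adjRel (T : Set (H × K))) →
      0 ≤ (inner ℂ f f' : ℂ).re ∧ (inner ℂ f f' : ℂ).im = 0) := by
  have key : ∀ (f f' : H) (h : K), (f, h) ∈ T → (h, f') ∈ adjRel (T : Set (H × K)) →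
      (inner ℂ f f' : ℂ) = (‖h‖ : ℂ) ^ 2 := by
    intro f f' h hT hadj
    have := hadj (f, h) hT
    simp only at this
    rw [← this, inner_self_eq_norm_sq_to_K]
    norm_cast
  refine ⟨?_, key, ?_⟩
  · ext f'
    simp only [Set.mem_setOf_eq]
    constructor
    · rintro ⟨h, hT, hadj⟩
      -- h = 0 since ⟨h,h⟩ = ⟨0,f'⟩ = 0
      have h0 : (inner ℂ (0 : H) f' : ℂ) = (‖h‖ : ℂ) ^ 2 := key 0 f' h hT hadj
      rw [inner_zero_left] at h0
      have : h = 0 := by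
        have : ‖h‖ = 0 := by
          have := h0.symm
          norm_cast at this
          simpa [pow_eq_zero_iff] using this
        simpa using this
      subst this
      intro p hp
      have := hadj p hp
      simpa using this
    · intro hadj
      refine ⟨0, ?_, ?_⟩
      · exact T.zero_mem
      · intro p hp
        have := hadj p hp
        simpa using this
  · rintro f f' ⟨h, hT, hadj⟩
    have := key f f' h hT hadj
    rw [this]
    rw [← Complex.ofReal_pow]
    exact ⟨by rw [Complex.ofReal_re]; positivity, Complex.ofReal_im _⟩
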